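/- If a submetrizable topological space X is an absolute neighborhood extensor for the class of compact metrizable spaces, then X is an absolute neighborhood extensor for the class of all compact Hausdorff spaces. -/

import Mathlib

open Set Topology TopologicalSpace

universe u v

/-- A `k_ω`-sequence for `X`. -/
def IsKOmegaSeq (X : Type v) [TopologicalSpace X] (C : ℕ → Set X) : Prop :=
  (∀ n, IsCompact (C n)) ∧ Monotone C ∧ (⋃ n, C n) = Set.univ ∧
    ∀ U : Set X, IsOpen U ↔ ∀ n, IsOpen ((Subtype.val ⁻¹' U : Set (C n)))

/-- A `k_ω`-space: a Hausdorff space which is the direct limit of a `k_ω`-sequence. -/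
def IsKOmega (X : Type v) [TopologicalSpace X] : Prop :=
  T2Space X ∧ ∃ C : ℕ → Set X, IsKOmegaSeq X C

/-- A space is submetrizable if its topology is finer than some metrizable topology. -/
def Submetrizable (X : Type v) [t : TopologicalSpace X] : Prop :=
  ∃ m : TopologicalSpace X, t ≤ m ∧ @MetrizableSpace X m

/-- `X` is an absolute neighborhood extensor for the class of spaces satisfying `P`. -/
def IsANEFor (X : Type u) [TopologicalSpace X]
    (P : (A : Type v) → TopologicalSpace A → Prop) : Prop :=
  ∀ (A : Type v) [tA : TopologicalSpace A], P A tA → ∀ B : Set A, IsClosed B →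
    ∀ f : B → X, Continuous f → ∃ N : Set A, IsOpen N ∧ B ⊆ N ∧
      ∃ g : N → X, Continuous g ∧ ∀ (a : A) (hB : a ∈ B) (hN : a ∈ N), g ⟨a, hN⟩ = f ⟨a, hB⟩

/-- `X` is an `ANR(k_ω)`-space: whenever `X` is embedded as a closed subspace of a
`k_ω`-space, it is a retract of a neighborhood. -/
def IsANRkw (X : Type u) [TopologicalSpace X] : Prop :=
  IsKOmega X ∧ ∀ (Y : Type v) [TopologicalSpace Y], IsKOmega Y →
    ∀ e : X → Y, IsClosedEmbedding e →
      ∃ N : Set Y, (∀ y ∈ Set.range e, N ∈ nhds y) ∧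
        ∃ r : N → Y, Continuous r ∧ (∀ z : N, r z ∈ Set.range e) ∧
          ∀ z : N, (z : Y) ∈ Set.range e → r z = (z : Y)

theorem aux_ANE {X : Type u} [TopologicalSpace X] {Y : Type u} [MetricSpace Y]
    (ι : X → Y) (hιinj : Function.Injective ι) (hιc : Continuous ι)
    (h : ∀ (A : Type v) [tA : TopologicalSpace A],
      (@CompactSpace A tA ∧ @MetrizableSpace A tA) → ∀ B : Set A, IsClosed B →
      ∀ f : B → X, Continuous f → ∃ N : Set A, IsOpen N ∧ B ⊆ N ∧
        ∃ g : N → X, Continuous g ∧ ∀ (a : A) (hB : a ∈ B) (hN : a ∈ N), g ⟨a, hN⟩ = f ⟨a, hB⟩)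
    (A : Type v) [tA : TopologicalSpace A] [CompactSpace A] [T2Space A]
    (B : Set A) (hB : IsClosed B) (f : B → X) (hf : Continuous f) :
    ∃ N : Set A, IsOpen N ∧ B ⊆ N ∧ ∃ g : N → X, Continuous g ∧
      ∀ (a : A) (hBa : a ∈ B) (hN : a ∈ N), g ⟨a, hN⟩ = f ⟨a, hBa⟩ := by
  rcases isEmpty_or_nonempty B with hBe | hBne
  · have hBempty : B = ∅ := Set.isEmpty_coe_sort.mp hBe
    subst hBempty
    refine ⟨∅, isOpen_empty, subset_rfl,
      fun x => (Set.notMem_empty x.1 x.2).elim, ?_, ?_⟩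
    · haveI : IsEmpty ((∅ : Set A) : Set A) := Set.isEmpty_coe_sort.mpr rfl
      exact continuous_def.mpr fun s _ => by
        rw [Set.eq_empty_of_isEmpty (_ ⁻¹' s)]; exact isOpen_empty
    · exact fun a hBa _ => (Set.notMem_empty a hBa).elim
  haveI : CompactSpace B := isCompact_iff_compactSpace.mp hB.isCompact
  have hK : IsCompact (Set.range fun b : B => ι (f b)) := isCompact_range (hιc.comp hf)
  obtain ⟨c, hc_count, hc_sub⟩ := hK.isSeparable
  obtain ⟨b₀⟩ := hBne
  have hcne : c.Nonempty := by
    rcases c.eq_empty_or_nonempty with rfl | hne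
    · simpa using hc_sub ⟨b₀, rfl⟩
    · exact hne
  obtain ⟨d, hd⟩ := hc_count.exists_eq_range hcne
  have hdense : ∀ b : B, ι (f b) ∈ closure (Set.range d) := fun b => hd ▸ hc_sub ⟨b, rfl⟩
  -- Tietze extensions of the coordinate functions
  have hT : ∀ n : ℕ, ∃ F : C(A, ℝ), ∀ b : B, F b = dist (ι (f b)) (d n) := by
    intro n
    obtain ⟨F, hFr⟩ := ContinuousMap.exists_restrict_eq hB
      ⟨fun b : B => dist (ι (f b)) (d n), (hιc.comp hf).dist continuous_const⟩
    exact ⟨F, fun b => ContinuousMap.congr_fun hFr b⟩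
  choose F hF using hT
  have hkey : ∀ b b' : B, (∀ n, F n b = F n b') → f b = f b' := by
    intro b b' hbb'
    apply hιinj
    have hdist : ∀ n, dist (ι (f b)) (d n) = dist (ι (f b')) (d n) := fun n => by
      rw [← hF n b, ← hF n b']; exact hbb' n
    have hle0 : dist (ι (f b)) (ι (f b')) ≤ 0 := by
      by_contra hpos
      push_neg at hpos
      obtain ⟨p, hp, hlt⟩ := Metric.mem_closure_iff.mp (hdense b) _ (half_pos hpos)
      obtain ⟨n, rfl⟩ := hp
      have htri : dist (ι (f b)) (ι (f b')) ≤ dist (ι (f b)) (d n) + dist (d n) (ι (f b')) :=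
        dist_triangle _ _ _
      rw [dist_comm (d n), ← hdist n] at htri
      linarith
    exact dist_le_zero.mp hle0
  -- the compact metrizable quotient
  have hπc : Continuous (fun a : A => fun n => F n a) := continuous_pi fun n => (F n).continuous
  haveI : CompactSpace ↥(Set.range fun a : A => fun n => F n a) :=
    isCompact_iff_compactSpace.mp (isCompact_range hπc)
  let A' : Type v := ULift.{v} ↥(Set.range fun a : A => fun n => F n a)
  haveI : CompactSpace A' := Homeomorph.ulift.symm.compactSpace
  haveI : MetrizableSpace A' := Homeomorph.ulift.isEmbedding.metrizableSpace
  let ρ : A → A' := fun a => ULift.up ⟨fun n => F n a, Set.mem_range_self a⟩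
  have hρc : Continuous ρ := continuous_uliftUp.comp (hπc.subtype_mk _)
  have hρkey : ∀ b b' : B, ρ b = ρ b' → f b = f b' := fun b b' hr =>
    hkey b b' fun n => congrArg (fun z : A' => z.down.1 n) hr
  let B' : Set A' := ρ '' B
  have hB'c : IsClosed B' := (hB.isCompact.image hρc).isClosed
  have hmem : ∀ y : B', ∃ b : B, ρ b = (y : A') := fun y => by
    obtain ⟨a, ha, hr⟩ := y.2
    exact ⟨⟨a, ha⟩, hr⟩
  let g : B' → X := fun y => f (hmem y).choose
  have hgwd : ∀ (b : B) (hy : ρ b ∈ B'), g ⟨ρ b, hy⟩ = f b := fun b hy =>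
    hρkey _ _ ((hmem ⟨ρ b, hy⟩).choose_spec)
  let q : B → B' := fun b => ⟨ρ b, ⟨b, b.2, rfl⟩⟩
  have hqc : Continuous q := (hρc.comp continuous_subtype_val).subtype_mk _
  have hqsurj : Function.Surjective q := fun y => by
    obtain ⟨b, hb⟩ := hmem y
    exact ⟨b, Subtype.ext hb⟩
  have hq : Topology.IsQuotientMap q := hqc.isClosedMap.isQuotientMap hqc hqsurj
  have hgc : Continuous g := by
    rw [hq.continuous_iff]
    have hcomp : g ∘ q = f := funext fun b => hgwd b _
    rw [hcomp]
    exact hf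
  obtain ⟨N', hN'o, hB'N, g', hg'c, hg'ext⟩ :=
    h A' ⟨inferInstance, inferInstance⟩ B' hB'c g hgc
  refine ⟨ρ ⁻¹' N', hN'o.preimage hρc, fun a ha => hB'N ⟨a, ha, rfl⟩,
    fun z => g' ⟨ρ z.1, z.2⟩, hg'c.comp ((hρc.comp continuous_subtype_val).subtype_mk _), ?_⟩
  intro a hBa hN
  exact (hg'ext (ρ a) ⟨a, hBa, rfl⟩ hN).trans (hgwd ⟨a, hBa⟩ ⟨a, hBa, rfl⟩)

/-- A submetrizable ANE for the class of compact metrizable spaces is an ANE for the class of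
all compact Hausdorff spaces. -/
theorem ANE_compact_metrizable_to_compact_Hausdorff
    (X : Type u) [TopologicalSpace X] (hXs : Submetrizable X)
    (h : IsANEFor.{u, v} X fun A tA => @CompactSpace A tA ∧ @MetrizableSpace A tA) :
    IsANEFor.{u, v} X fun A tA => @CompactSpace A tA ∧ @T2Space A tA := by
  rename_i tX
  obtain ⟨m, hle, hm⟩ := hXs
  obtain ⟨mX, hmX⟩ : ∃ mX : MetricSpace X, mX.toUniformSpace.toTopologicalSpace = m :=
    ⟨@TopologicalSpace.metrizableSpaceMetric X m hm, rfl⟩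
  intro A tA hA B hB f hf
  haveI := hA.1; haveI := hA.2
  have hle' : tX ≤ mX.toUniformSpace.toTopologicalSpace := by
    rw [hmX]; exact hle
  have hid : Continuous[tX, mX.toUniformSpace.toTopologicalSpace]
      (id : X → X) := continuous_id_iff_le.mpr hle'
  exact @aux_ANE X tX X mX id Function.injective_id hid (fun A' tA' hc => h A' hc) A tA _ _
    B hB f hf
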